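/- Gauge bound for p^{-e}-linear maps. Let k be a perfect field of characteristic p, let S = k[x_1,…,x_n], let M be a finitely generated S-module with a fixed finite generating family m_1,…,m_k, and let κ be a p^{-e}-linear map on M for some e ≥ 1. Then there exists a constant K ∈ ℕ such that for all d ∈ ℕ and all m ∈ M_d: (1) κ(m) ∈ M_{⌊(d+K)/p^e⌋}; and (2) for every ν ≥ 1, κ^ν(m) ∈ M_{⌊d/p^{νe}⌋ + K}, where κ^ν denotes the ν-fold composite of κ and ⌊·⌋ is integer floor. -/

import Mathlib

/-- `boxSpan k n d` is the `k`-subspace of `k[x_1,…,x_n]` spanned by monomials whose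
exponent in each variable is at most `d`. -/
def boxSpan (k : Type*) [CommSemiring k] (n d : ℕ) : Set (MvPolynomial (Fin n) k) :=
  {f | ∀ m ∈ f.support, ∀ j : Fin n, m j ≤ d}

/-- `gaugeLE k n gen d` is the set of elements of `M` expressible as combinations of
the fixed generators `gen` with coefficients in `boxSpan k n d`; i.e. the elements of
gauge at most `d`. -/
def gaugeLE (k : Type*) [CommSemiring k] (n : ℕ) {M : Type*} [AddCommMonoid M]
    [Module (MvPolynomial (Fin n) k) M] {t : ℕ} (gen : Fin t → M) (d : ℕ) : Set M :=
  {x | ∃ f : Fin t → MvPolynomial (Fin n) k,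
    (∀ i, f i ∈ boxSpan k n d) ∧ x = ∑ i, f i • gen i}

section helpers

variable {k : Type*} [CommSemiring k] {n : ℕ} {M : Type*} [AddCommMonoid M]
    [Module (MvPolynomial (Fin n) k) M] {t : ℕ} {gen : Fin t → M}

lemma boxSpan_mono {d d' : ℕ} (h : d ≤ d') : boxSpan k n d ⊆ boxSpan k n d' :=
  fun _ hf m hm j => le_trans (hf m hm j) h

lemma gaugeLE_mono {d d' : ℕ} (h : d ≤ d') : gaugeLE k n gen d ⊆ gaugeLE k n gen d' := by
  rintro x ⟨f, hf, rfl⟩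
  exact ⟨f, fun i => boxSpan_mono h (hf i), rfl⟩

lemma zero_mem_boxSpan (d : ℕ) : (0 : MvPolynomial (Fin n) k) ∈ boxSpan k n d := by
  intro m hm
  simp at hm

lemma add_mem_boxSpan {d : ℕ} {f g : MvPolynomial (Fin n) k}
    (hf : f ∈ boxSpan k n d) (hg : g ∈ boxSpan k n d) : f + g ∈ boxSpan k n d := by
  intro m hm j
  rcases Finset.mem_union.1 (MvPolynomial.support_add hm) with h | h
  · exact hf m h j
  · exact hg m h j

lemma mul_mem_boxSpan {a b : ℕ} {f g : MvPolynomial (Fin n) k}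
    (hf : f ∈ boxSpan k n a) (hg : g ∈ boxSpan k n b) : f * g ∈ boxSpan k n (a + b) := by
  classical
  intro m hm j
  obtain ⟨m1, hm1, m2, hm2, rfl⟩ := Finset.mem_add.1 (MvPolynomial.support_mul f g hm)
  exact add_le_add (hf m1 hm1 j) (hg m2 hm2 j)

lemma monomial_mem_boxSpan {d : ℕ} {β : Fin n →₀ ℕ} {c : k} (h : ∀ j, β j ≤ d) :
    MvPolynomial.monomial β c ∈ boxSpan k n d := by
  intro m hm j
  have := MvPolynomial.support_monomial_subset hm
  simp only [Finset.mem_singleton] at this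
  subst this
  exact h j

lemma zero_mem_gaugeLE (d : ℕ) : (0 : M) ∈ gaugeLE k n gen d :=
  ⟨0, fun _ => zero_mem_boxSpan d, by simp⟩

lemma add_mem_gaugeLE {d : ℕ} {x y : M} (hx : x ∈ gaugeLE k n gen d)
    (hy : y ∈ gaugeLE k n gen d) : x + y ∈ gaugeLE k n gen d := by
  obtain ⟨f, hf, rfl⟩ := hx
  obtain ⟨g, hg, rfl⟩ := hy
  exact ⟨f + g, fun i => add_mem_boxSpan (hf i) (hg i), by
    simp [add_smul, Finset.sum_add_distrib]⟩

lemma sum_mem_gaugeLE {d : ℕ} {ι : Type*} (s : Finset ι) (g : ι → M)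
    (h : ∀ i ∈ s, g i ∈ gaugeLE k n gen d) : (∑ i ∈ s, g i) ∈ gaugeLE k n gen d := by
  classical
  induction s using Finset.induction_on with
  | empty => simpa using zero_mem_gaugeLE d
  | insert _ _ hnot ih =>
    rw [Finset.sum_insert hnot]
    exact add_mem_gaugeLE (h _ (Finset.mem_insert_self _ _))
      (ih fun i hi => h i (Finset.mem_insert_of_mem hi))

lemma smul_mem_gaugeLE {a b : ℕ} {f : MvPolynomial (Fin n) k} {x : M}
    (hf : f ∈ boxSpan k n a) (hx : x ∈ gaugeLE k n gen b) :
    f • x ∈ gaugeLE k n gen (a + b) := by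
  obtain ⟨g, hg, rfl⟩ := hx
  refine ⟨fun i => f * g i, fun i => mul_mem_boxSpan hf (hg i), ?_⟩
  rw [Finset.smul_sum]
  simp [smul_smul]

lemma exists_mem_boxSpan (f : MvPolynomial (Fin n) k) : ∃ d, f ∈ boxSpan k n d :=
  ⟨f.support.sup fun m => Finset.univ.sup fun j => m j,
    fun m hm j => le_trans (Finset.le_sup (f := fun j => m j) (Finset.mem_univ j))
      (Finset.le_sup (f := fun m => Finset.univ.sup fun j => m j) hm)⟩

lemma exists_mem_gaugeLE (hgen : Submodule.span (MvPolynomial (Fin n) k) (Set.range gen) = ⊤)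
    (x : M) : ∃ d, x ∈ gaugeLE k n gen d := by
  have hx : x ∈ Submodule.span (MvPolynomial (Fin n) k) (Set.range gen) := hgen ▸ trivial
  obtain ⟨c, hc⟩ := Submodule.mem_span_range_iff_exists_fun _ |>.1 hx
  choose D hD using fun i => exists_mem_boxSpan (k := k) (n := n) (c i)
  refine ⟨Finset.univ.sup D, c, fun i => boxSpan_mono (Finset.le_sup (Finset.mem_univ i)) (hD i),
    hc.symm⟩

end helpers

lemma exists_pow_root {k : Type*} [Field k] [PerfectField k] (p : ℕ) [Fact p.Prime]
    [CharP k p] (e : ℕ) (c : k) : ∃ b : k, b ^ p ^ e = c := by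
  haveI : ExpChar k p := ExpChar.prime Fact.out
  induction e with
  | zero => exact ⟨c, by simp⟩
  | succ e ih =>
    obtain ⟨b', hb'⟩ := ih
    obtain ⟨b, hb⟩ := surjective_frobenius k p b'
    refine ⟨b, ?_⟩
    rw [pow_succ', pow_mul, ← frobenius_def (p := p), hb, hb']

/-- Gauge bound for `p^{-e}`-linear maps: for a finitely generated module `M` over
`S = k[x_1,…,x_n]` with fixed generators, and `κ` a `p^{-e}`-linear map on `M`, there
is a constant `K` such that elements of gauge `≤ d` are sent by `κ` into gauge
`≤ ⌊(d + K)/p^e⌋`, and by `κ^ν` into gauge `≤ ⌊d/p^{νe}⌋ + K`. -/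
theorem gauge_bound {k : Type*} [Field k] [PerfectField k]
    (p : ℕ) [Fact p.Prime] [CharP k p] {n : ℕ}
    {M : Type*} [AddCommGroup M] [Module (MvPolynomial (Fin n) k) M]
    {t : ℕ} (gen : Fin t → M)
    (hgen : Submodule.span (MvPolynomial (Fin n) k) (Set.range gen) = ⊤)
    (e : ℕ) (he : 1 ≤ e)
    (κ : M → M)
    (hadd : ∀ x y : M, κ (x + y) = κ x + κ y)
    (hlin : ∀ (r : MvPolynomial (Fin n) k) (m : M), κ (r ^ p ^ e • m) = r • κ m) :
    ∃ K : ℕ, ∀ d : ℕ, ∀ m ∈ gaugeLE k n gen d,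
      κ m ∈ gaugeLE k n gen ((d + K) / p ^ e) ∧
      ∀ ν : ℕ, 1 ≤ ν → κ^[ν] m ∈ gaugeLE k n gen (d / p ^ (ν * e) + K) := by
  classical
  set q := p ^ e with hqdef
  have hp : 2 ≤ p := (Fact.out : p.Prime).two_le
  have hq0 : 0 < q := Nat.pow_pos (n := e) (by omega)
  have hq2 : 2 ≤ q := by
    calc 2 ≤ p := hp
    _ = p ^ 1 := (pow_one p).symm
    _ ≤ p ^ e := Nat.pow_le_pow_right (by omega) he
  -- choose the constant C bounding κ on monomial-multiples of generators
  choose D hD using fun iα : Fin t × (Fin n → Fin q) =>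
    exists_mem_gaugeLE hgen
      (κ ((MvPolynomial.monomial (Finsupp.equivFunOnFinite.symm fun j => ((iα.2 j : ℕ)))
        (1 : k)) • gen iα.1))
  set C := Finset.univ.sup D with hCdef
  have hDC : ∀ iα : Fin t × (Fin n → Fin q),
      κ ((MvPolynomial.monomial (Finsupp.equivFunOnFinite.symm fun j => ((iα.2 j : ℕ)))
        (1 : k)) • gen iα.1) ∈ gaugeLE k n gen C :=
    fun iα => gaugeLE_mono (Finset.le_sup (Finset.mem_univ _)) (hD iα)
  let κ' : M →+ M := AddMonoidHom.mk' κ hadd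
  have hκ' : ∀ x, κ' x = κ x := fun _ => rfl
  -- the one-step bound
  have hstep : ∀ d : ℕ, ∀ m ∈ gaugeLE k n gen d, κ m ∈ gaugeLE k n gen (d / q + C) := by
    rintro d m ⟨f, hf, rfl⟩
    rw [← hκ', map_sum]
    apply sum_mem_gaugeLE
    intro i _
    rw [hκ']
    have hexp : f i • gen i
        = ∑ β ∈ (f i).support,
            (MvPolynomial.monomial β (MvPolynomial.coeff β (f i))) • gen i := by
      conv_lhs => rw [(f i).as_sum]
      rw [Finset.sum_smul]
    rw [hexp, ← hκ', map_sum]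
    apply sum_mem_gaugeLE
    intro β hβ
    rw [hκ']
    obtain ⟨b, hb⟩ := exists_pow_root p e (MvPolynomial.coeff β (f i))
    set γ : Fin n →₀ ℕ := β.mapRange (· / q) (Nat.zero_div q) with hγ
    set α' : Fin n → Fin q := fun j => (⟨β j % q, Nat.mod_lt _ hq0⟩ : Fin q) with hα'
    set α : Fin n →₀ ℕ := Finsupp.equivFunOnFinite.symm (fun j => ((α' j : ℕ))) with hα
    have hβeq : β = q • γ + α := by
      ext j
      have h1 : (q • γ + α) j = q * (β j / q) + β j % q := by
        simp [hγ, hα, hα', Finsupp.mapRange_apply, mul_comm]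
      rw [h1]
      exact (Nat.div_add_mod (β j) q).symm
    have hmono : (MvPolynomial.monomial β (MvPolynomial.coeff β (f i)))
        = (MvPolynomial.monomial γ b) ^ q * MvPolynomial.monomial α 1 := by
      rw [MvPolynomial.monomial_pow, MvPolynomial.monomial_mul, mul_one, hb, ← hβeq]
    rw [hmono, mul_smul, hlin]
    have h1 : κ (MvPolynomial.monomial α (1 : k) • gen i) ∈ gaugeLE k n gen C := by
      simpa [hα] using hDC (i, α')
    have h2 : MvPolynomial.monomial γ b ∈ boxSpan k n (d / q) := by
      apply monomial_mem_boxSpan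
      intro j
      have : γ j = β j / q := rfl
      rw [this]
      exact Nat.div_le_div_right (hf i β hβ j)
    exact smul_mem_gaugeLE h2 h1
  -- arithmetic helper
  have harith : ∀ a : ℕ, (a + (2 * C + 1)) / q + C ≤ a / q + (2 * C + 1) := by
    intro a
    have h1 : a + (2 * C + 1) ≤ a + (C + 1) * q := by nlinarith
    have h2 : (a + (C + 1) * q) / q = a / q + (C + 1) := Nat.add_mul_div_right a (C + 1) hq0
    have h3 := Nat.div_le_div_right (c := q) h1
    omega
  -- iterated bound
  have hiter : ∀ ν : ℕ, 1 ≤ ν → ∀ d : ℕ, ∀ m ∈ gaugeLE k n gen d,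
      κ^[ν] m ∈ gaugeLE k n gen (d / q ^ ν + (2 * C + 1)) := by
    intro ν
    induction ν with
    | zero => omega
    | succ ν ih =>
      intro _ d m hm
      rcases Nat.eq_zero_or_pos ν with hν0 | hν1
      · subst hν0
        simpa using gaugeLE_mono (by omega) (hstep d m hm)
      · rw [Function.iterate_succ_apply']
        have h1 := hstep _ _ (ih hν1 d m hm)
        refine gaugeLE_mono ?_ h1
        have h2 : d / q ^ ν / q = d / q ^ (ν + 1) := by
          rw [Nat.div_div_eq_div_mul, ← pow_succ]
        calc (d / q ^ ν + (2 * C + 1)) / q + C ≤ d / q ^ ν / q + (2 * C + 1) := harith _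
        _ = d / q ^ (ν + 1) + (2 * C + 1) := by rw [h2]
  refine ⟨q * C + (2 * C + 1), fun d m hm => ⟨?_, ?_⟩⟩
  · refine gaugeLE_mono ?_ (hstep d m hm)
    have h2 : (d + C * q) / q = d / q + C := Nat.add_mul_div_right d C hq0
    have h3 := Nat.div_le_div_right (c := q)
      (show d + C * q ≤ d + (q * C + (2 * C + 1)) by nlinarith)
    omega
  · intro ν hν
    have h1 := hiter ν hν d m hm
    refine gaugeLE_mono ?_ h1
    have h2 : q ^ ν = p ^ (ν * e) := by rw [hqdef, ← pow_mul, mul_comm]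
    rw [← h2]
    omega
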